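/- In a finite orthomodular poset, for a nonempty subset X ⊆ A and an element p ∈ A, p → (X ⊙ p) = ⋃{Min U(q, p') : q ∈ X}; consequently X ≤₁ p → (X ⊙ p) and X ≤₂ p → (X ⊙ p). -/

import Mathlib

section
variable (A : Type*)

/-- Set of minimal upper bounds. -/
def MinU [PartialOrder A] (S : Set A) : Set A := {a | Minimal (· ∈ upperBounds S) a}

/-- Set of maximal lower bounds. -/
def MaxL [PartialOrder A] (S : Set A) : Set A := {a | Maximal (· ∈ lowerBounds S) a}

/-- An orthomodular poset: a bounded poset with an antitone involution that is a
complementation, such that orthogonal elements have a join and the orthomodular law holds. -/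
structure OMP [PartialOrder A] [BoundedOrder A] where
  compl : A → A
  compl_antitone : ∀ a b : A, a ≤ b → compl b ≤ compl a
  compl_involutive : ∀ a : A, compl (compl a) = a
  sup_compl : ∀ a : A, IsLUB {a, compl a} ⊤
  inf_compl : ∀ a : A, IsGLB {a, compl a} ⊥
  ortho_sup : ∀ a b : A, a ≤ compl b → ∃ c, IsLUB {a, b} c
  oml : ∀ a b m : A, a ≤ b → IsGLB {b, compl a} m → IsLUB {a, m} b

end

section
variable {A : Type*} [PartialOrder A] [BoundedOrder A]
set_option linter.unusedSectionVars false

/-- The inexact conjunction `a ⊙ b := Min U(a, b') ∧ b` (a set of elements). -/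
def odot (M : OMP A) (a b : A) : Set A :=
  {x | ∃ m ∈ MinU A {a, M.compl b}, IsGLB {m, b} x}

/-- The inexact implication `a → b := a' ∨ Max L(a, b)` (a set of elements). -/
def arrow (M : OMP A) (a b : A) : Set A :=
  {x | ∃ m ∈ MaxL A {a, b}, IsLUB {M.compl a, m} x}

/-- Extension of `⊙` to nonempty subsets. -/
def odotS (M : OMP A) (B C : Set A) : Set A := ⋃ b ∈ B, ⋃ c ∈ C, odot M b c

/-- Extension of `→` to nonempty subsets. -/
def arrowS (M : OMP A) (B C : Set A) : Set A := ⋃ b ∈ B, ⋃ c ∈ C, arrow M b c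

/-- `B ≤₁ C`: every element of `B` is below some element of `C`. -/
def le1 (B C : Set A) : Prop := ∀ b ∈ B, ∃ c ∈ C, b ≤ c

/-- `B ≤₂ C`: every element of `C` is above some element of `B`. -/
def le2 (B C : Set A) : Prop := ∀ c ∈ C, ∃ b ∈ B, b ≤ c

/-- `compl` turns LUBs into GLBs. -/
lemma glb_compl (M : OMP A) {a b x : A} (h : IsLUB {a, b} x) :
    IsGLB {M.compl a, M.compl b} (M.compl x) := by
  constructor
  · rintro y (rfl | rfl)
    · exact M.compl_antitone _ _ (h.1 (by simp))
    · exact M.compl_antitone _ _ (h.1 (by simp))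
  · intro y hy
    have h1 : a ≤ M.compl y := by
      have := M.compl_antitone _ _ (hy (Set.mem_insert _ _))
      rwa [M.compl_involutive] at this
    have h2 : b ≤ M.compl y := by
      have := M.compl_antitone _ _ (hy (Set.mem_insert_of_mem _ rfl))
      rwa [M.compl_involutive] at this
    have : x ≤ M.compl y := h.2 (by rintro z (rfl | rfl) <;> assumption)
    have := M.compl_antitone _ _ this
    rwa [M.compl_involutive] at this

/-- If `M.compl b ≤ a` then the GLB of `{a, b}` exists. -/
lemma exists_glb (M : OMP A) {a b : A} (h : M.compl b ≤ a) :
    ∃ c, IsGLB {a, b} c := by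
  have h1 : M.compl a ≤ M.compl (M.compl b) := M.compl_antitone _ _ h
  obtain ⟨s, hs⟩ := M.ortho_sup (M.compl a) (M.compl b) h1
  refine ⟨M.compl s, ?_⟩
  have := glb_compl M hs
  rwa [M.compl_involutive, M.compl_involutive] at this

/-- If `c ≤ p`, then `MaxL {p, c}` is exactly `{c}`. -/
lemma maxL_of_le {p c : A} (h : c ≤ p) : MaxL A {p, c} = {c} := by
  have hc : c ∈ lowerBounds ({p, c} : Set A) := by
    rintro z (rfl | rfl); exact h; exact le_rfl
  ext n
  constructor
  · rintro ⟨hn1, hn2⟩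
    have hnc : n ≤ c := hn1 (by simp)
    exact le_antisymm hnc (hn2 hc hnc)
  · rintro rfl
    exact ⟨hc, fun y hy _ => hy (by simp)⟩

end

/-- For a nonempty subset `X` and an element `p` of a finite orthomodular poset,
`p → (X ⊙ p) = ⋃ {Min U(q, p') : q ∈ X}`; consequently `X ≤₁ p → (X ⊙ p)` and
`X ≤₂ p → (X ⊙ p)`. -/
theorem stmt_5 {A : Type*} [PartialOrder A] [BoundedOrder A] [Finite A] (M : OMP A)
    (X : Set A) (hX : X.Nonempty) (p : A) :
    arrowS M {p} (odotS M X {p}) = (⋃ q ∈ X, MinU A {q, M.compl p}) ∧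
    le1 X (arrowS M {p} (odotS M X {p})) ∧
    le2 X (arrowS M {p} (odotS M X {p})) := by
  have hkey : arrowS M {p} (odotS M X {p}) = (⋃ q ∈ X, MinU A {q, M.compl p}) := by
    ext x
    simp only [arrowS, odotS, Set.mem_iUnion, Set.mem_singleton_iff, exists_prop,
      exists_eq_left]
    constructor
    · rintro ⟨c, ⟨q, hq, hc⟩, hx⟩
      obtain ⟨m, hm, hglb⟩ := hc
      obtain ⟨n, hn, hlub⟩ := hx
      -- c ≤ p
      have hcp : c ≤ p := hglb.1 (by simp)
      rw [maxL_of_le hcp] at hn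
      subst hn
      -- p' ≤ m since m is an upper bound of {q, p'}
      have hpm : M.compl p ≤ m := hm.1 (by simp)
      have hglb' : IsGLB {m, M.compl (M.compl p)} n := by
        rwa [M.compl_involutive]
      have hlub' : IsLUB {M.compl p, n} x := hlub
      have hlub'' : IsLUB {M.compl p, n} m := M.oml _ _ _ hpm hglb'
      have : x = m := hlub'.unique hlub''
      subst this
      exact ⟨q, hq, hm⟩
    · rintro ⟨q, hq, hm⟩
      have hpm : M.compl p ≤ x := hm.1 (by simp)
      obtain ⟨c, hglb⟩ := exists_glb M (a := x) (b := p) hpm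
      have hcp : c ≤ p := hglb.1 (by simp)
      refine ⟨c, ⟨q, hq, ⟨x, hm, hglb⟩⟩, ?_⟩
      refine ⟨c, by rw [maxL_of_le hcp]; rfl, ?_⟩
      have hglb' : IsGLB {x, M.compl (M.compl p)} c := by
        rwa [M.compl_involutive]
      exact M.oml _ _ _ hpm hglb'
  refine ⟨hkey, ?_, ?_⟩
  · intro b hb
    rw [hkey]
    obtain ⟨m, _, hm⟩ := exists_minimal_le_of_wellFoundedLT
      (a := (⊤ : A)) (P := (· ∈ upperBounds ({b, M.compl p} : Set A)))
      (fun z _ => le_top)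
    exact ⟨m, Set.mem_iUnion₂.2 ⟨b, hb, hm⟩, hm.1 (by simp)⟩
  · intro c hc
    rw [hkey] at hc
    obtain ⟨q, hq, hm⟩ := Set.mem_iUnion₂.1 hc
    exact ⟨q, hq, hm.1 (by simp)⟩
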